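/- For F = (21/5)·ut/s − (84/25)·t³/s² (where s = y⁽⁴⁾, t = y⁽⁵⁾, u = y⁽⁶⁾), the first Wünschmann expression W₁[F] = 245𝒟²F₆ − 245𝒟F₅ + 98F₄ − 210(𝒟F₆)F₆ + 70F₅F₆ + 20F₆³ vanishes identically on the domain s ≠ 0. -/

import Mathlib

/-- Partial derivative of G : ℝ⁸ → ℝ in the i-th coordinate. Coordinates:
z 0 = x, z (k+1) = y⁽ᵏ⁾ for k = 0,…,6. -/
noncomputable def pd (i : Fin 8) (G : (Fin 8 → ℝ) → ℝ) : (Fin 8 → ℝ) → ℝ :=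
  fun z => fderiv ℝ G z (Pi.single i 1)

/-- The total derivative 𝒟 = ∂ₓ + Σ_{k=1}^{6} y⁽ᵏ⁾ ∂/∂y⁽ᵏ⁻¹⁾ + F ∂/∂y⁽⁶⁾ along
solutions of y⁽⁷⁾ = F. -/
noncomputable def Dt (F G : (Fin 8 → ℝ) → ℝ) : (Fin 8 → ℝ) → ℝ := fun z =>
  pd 0 G z + z 2 * pd 1 G z + z 3 * pd 2 G z + z 4 * pd 3 G z + z 5 * pd 4 G z +
    z 6 * pd 5 G z + z 7 * pd 6 G z + F z * pd 7 G z

/-- Fₖ = ∂F/∂y⁽ᵏ⁾. -/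
noncomputable def Fp (k : ℕ) (F : (Fin 8 → ℝ) → ℝ) : (Fin 8 → ℝ) → ℝ :=
  pd (Fin.ofNat 8 (k + 1 : ℕ)) F

/-- The first Wünschmann condition W₁ of a 7th order ODE y⁽⁷⁾ = F. -/
noncomputable def W1 (F : (Fin 8 → ℝ) → ℝ) : (Fin 8 → ℝ) → ℝ := fun z =>
  245 * Dt F (Dt F (Fp 6 F)) z - 245 * Dt F (Fp 5 F) z + 98 * Fp 4 F z -
    210 * Dt F (Fp 6 F) z * Fp 6 F z + 70 * Fp 5 F z * Fp 6 F z + 20 * (Fp 6 F z) ^ 3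


noncomputable def fam (a b c d e : ℝ) : (Fin 8 → ℝ) → ℝ := fun z =>
  a * (z 7 * z 6 * (z 5)⁻¹) + b * (z 6 * z 6 * z 6 * (z 5 * z 5)⁻¹) + c * (z 6 * (z 5)⁻¹) +
    d * (z 7 * (z 5)⁻¹) + e * (z 6 * z 6 * (z 5 * z 5)⁻¹)

lemma fam_pd (a b c d e : ℝ) (z : Fin 8 → ℝ) (h : z 5 ≠ 0) (i : Fin 8) :
    pd i (fam a b c d e) z =
      (if i = 5 then
        -(a * (z 7 * z 6) / (z 5)^2) - 2*b*(z 6)^3/(z 5)^3 - c * z 6/(z 5)^2 - d * z 7/(z 5)^2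
          - 2*e*(z 6)^2/(z 5)^3
       else 0)
      + (if i = 6 then a * z 7 / z 5 + 3*b*(z 6)^2/(z 5)^2 + c / z 5 + 2*e*z 6/(z 5)^2 else 0)
      + (if i = 7 then a * z 6 / z 5 + d / z 5 else 0) := by
  have hs : HasFDerivAt (fun z : Fin 8 → ℝ => z 5) (ContinuousLinearMap.proj (R := ℝ) 5) z :=
    hasFDerivAt_apply 5 z
  have ht : HasFDerivAt (fun z : Fin 8 → ℝ => z 6) (ContinuousLinearMap.proj (R := ℝ) 6) z :=
    hasFDerivAt_apply 6 z
  have hu : HasFDerivAt (fun z : Fin 8 → ℝ => z 7) (ContinuousLinearMap.proj (R := ℝ) 7) z :=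
    hasFDerivAt_apply 7 z
  have hss : z 5 * z 5 ≠ 0 := mul_ne_zero h h
  have hinv : HasFDerivAt (fun z : Fin 8 → ℝ => (z 5)⁻¹) _ z :=
    (hasDerivAt_inv h).comp_hasFDerivAt z hs
  have hinv2 : HasFDerivAt (fun z : Fin 8 → ℝ => (z 5 * z 5)⁻¹) _ z :=
    (hasDerivAt_inv hss).comp_hasFDerivAt z (hs.mul hs)
  have h1 : HasFDerivAt (fun z : Fin 8 → ℝ => a * (z 7 * z 6 * (z 5)⁻¹)) _ z :=
    ((hu.mul ht).mul hinv).const_mul a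
  have h2 : HasFDerivAt (fun z : Fin 8 → ℝ => b * (z 6 * z 6 * z 6 * (z 5 * z 5)⁻¹)) _ z :=
    (((ht.mul ht).mul ht).mul hinv2).const_mul b
  have h3 : HasFDerivAt (fun z : Fin 8 → ℝ => c * (z 6 * (z 5)⁻¹)) _ z :=
    (ht.mul hinv).const_mul c
  have h4 : HasFDerivAt (fun z : Fin 8 → ℝ => d * (z 7 * (z 5)⁻¹)) _ z :=
    (hu.mul hinv).const_mul d
  have h5 : HasFDerivAt (fun z : Fin 8 → ℝ => e * (z 6 * z 6 * (z 5 * z 5)⁻¹)) _ z :=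
    ((ht.mul ht).mul hinv2).const_mul e
  have hf : HasFDerivAt (fam a b c d e) _ z := (((h1.add h2).add h3).add h4).add h5
  rw [pd, hf.fderiv]
  simp only [ContinuousLinearMap.add_apply, ContinuousLinearMap.smul_apply,
    ContinuousLinearMap.sub_apply, ContinuousLinearMap.coe_smul', Pi.smul_apply,
    ContinuousLinearMap.comp_apply, ContinuousLinearMap.smulRight_apply,
    ContinuousLinearMap.one_apply, ContinuousLinearMap.proj_apply, smul_eq_mul,
    Pi.single_apply]
  fin_cases i <;> simp <;> field_simp <;> ring

lemma Dt_congr (F' X Y : (Fin 8 → ℝ) → ℝ) (z : Fin 8 → ℝ) (hXY : X =ᶠ[nhds z] Y) :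
    Dt F' X z = Dt F' Y z := by
  unfold Dt pd
  rw [hXY.fderiv_eq]

lemma Dt_fam (F' : (Fin 8 → ℝ) → ℝ) (a b c d e : ℝ) (z : Fin 8 → ℝ) (h : z 5 ≠ 0) :
    Dt F' (fam a b c d e) z =
      z 6 * (-(a * (z 7 * z 6) / (z 5)^2) - 2*b*(z 6)^3/(z 5)^3 - c * z 6/(z 5)^2
          - d * z 7/(z 5)^2 - 2*e*(z 6)^2/(z 5)^3)
      + z 7 * (a * z 7 / z 5 + 3*b*(z 6)^2/(z 5)^2 + c / z 5 + 2*e*z 6/(z 5)^2)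
      + F' z * (a * z 6 / z 5 + d / z 5) := by
  unfold Dt
  simp only [fam_pd a b c d e z h]
  simp

lemma ev5 (z : Fin 8 → ℝ) (h : z 5 ≠ 0) : ∀ᶠ z' in nhds z, z' 5 ≠ 0 :=
  (isOpen_ne.preimage (continuous_apply 5)).mem_nhds h

lemma Fp6_eq (a b c d e : ℝ) (z : Fin 8 → ℝ) (h : z 5 ≠ 0) :
    Fp 6 (fam a b c d e) z = a * z 6 / z 5 + d / z 5 := by
  unfold Fp
  rw [fam_pd a b c d e z h]
  simp

lemma Fp5_eq (a b c d e : ℝ) (z : Fin 8 → ℝ) (h : z 5 ≠ 0) :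
    Fp 5 (fam a b c d e) z = a * z 7 / z 5 + 3*b*(z 6)^2/(z 5)^2 + c / z 5 + 2*e*z 6/(z 5)^2 := by
  unfold Fp
  rw [fam_pd a b c d e z h]
  simp

lemma Fp4_eq (a b c d e : ℝ) (z : Fin 8 → ℝ) (h : z 5 ≠ 0) :
    Fp 4 (fam a b c d e) z = -(a * (z 7 * z 6) / (z 5)^2) - 2*b*(z 6)^3/(z 5)^3 - c * z 6/(z 5)^2
      - d * z 7/(z 5)^2 - 2*e*(z 6)^2/(z 5)^3 := by
  unfold Fp
  rw [fam_pd a b c d e z h]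
  simp

set_option maxHeartbeats 2000000 in
/-- For F = (21/5)ut/s − (84/25)t³/s² (s = y⁽⁴⁾, t = y⁽⁵⁾, u = y⁽⁶⁾), the first
Wünschmann expression W₁[F] vanishes identically on the domain s ≠ 0. -/
theorem stmt_14 :
    ∀ z : Fin 8 → ℝ, z 5 ≠ 0 →
      W1 (fun z => 21 / 5 * (z 7 * z 6 / z 5) - 84 / 25 * (z 6) ^ 3 / (z 5) ^ 2) z = 0 := by
  have hF0 : (fun z : Fin 8 → ℝ => 21 / 5 * (z 7 * z 6 / z 5) - 84 / 25 * (z 6) ^ 3 / (z 5) ^ 2)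
      = fam (21/5) (-84/25) 0 0 0 := funext fun z => by unfold fam; ring
  rw [hF0]
  intro z h
  set FF := fam (21/5) (-84/25) 0 0 0 with hFF
  -- pointwise identities on the domain
  have h6 : ∀ z' : Fin 8 → ℝ, z' 5 ≠ 0 → Fp 6 FF z' = fam 0 0 (21/5) 0 0 z' := by
    intro z' h'
    rw [Fp6_eq _ _ _ _ _ z' h']
    unfold fam
    field_simp
    ring
  have h5 : ∀ z' : Fin 8 → ℝ, z' 5 ≠ 0 → Fp 5 FF z' = fam 0 0 0 (21/5) (-252/25) z' := by
    intro z' h'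
    rw [Fp5_eq _ _ _ _ _ z' h']
    unfold fam
    field_simp
    ring
  have hD6 : ∀ z' : Fin 8 → ℝ, z' 5 ≠ 0 → Dt FF (Fp 6 FF) z' = fam 0 0 0 (21/5) (-21/5) z' := by
    intro z' h'
    rw [Dt_congr FF (Fp 6 FF) (fam 0 0 (21/5) 0 0) z' ((ev5 z' h').mono h6),
      Dt_fam FF 0 0 (21/5) 0 0 z' h']
    unfold fam
    field_simp
    ring
  -- eventual equalities at z
  have e6 : Fp 6 FF =ᶠ[nhds z] fam 0 0 (21/5) 0 0 := (ev5 z h).mono h6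
  have e5 : Fp 5 FF =ᶠ[nhds z] fam 0 0 0 (21/5) (-252/25) := (ev5 z h).mono h5
  have eD6 : Dt FF (Fp 6 FF) =ᶠ[nhds z] fam 0 0 0 (21/5) (-21/5) := (ev5 z h).mono hD6
  unfold W1
  rw [Dt_congr FF (Dt FF (Fp 6 FF)) (fam 0 0 0 (21/5) (-21/5)) z eD6,
    Dt_congr FF (Fp 6 FF) (fam 0 0 (21/5) 0 0) z e6,
    Dt_congr FF (Fp 5 FF) (fam 0 0 0 (21/5) (-252/25)) z e5,
    Dt_fam FF 0 0 0 (21/5) (-21/5) z h,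
    Dt_fam FF 0 0 (21/5) 0 0 z h,
    Dt_fam FF 0 0 0 (21/5) (-252/25) z h,
    Fp6_eq (21/5) (-84/25) 0 0 0 z h,
    Fp5_eq (21/5) (-84/25) 0 0 0 z h,
    Fp4_eq (21/5) (-84/25) 0 0 0 z h, hFF]
  unfold fam
  field_simp
  ring
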